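/- arXiv:1707.06748 — 2 statements merged into one kernel-verified Lean document; each statement's English description precedes it below -/
import Mathlib

section
/- Let n ≥ 1 and let H, K : Matrix (Fin n × Fin 2) (Fin n × Fin 2) ℂ with Hᴴ = H. Assume: (1) K is the diagonal matrix with paired eigenvalues determined by an injective k : Fin n → ℝ; (2) H satisfies Condition L-2; (3) there exist two 2-words w₁ and w₂ (over H and K) based at 0 such that (w₁ * w₁ᴴ) * (w₂ * w₂ᴴ) ≠ (w₂ * w₂ᴴ) * (w₁ * w₁ᴴ). Then Algebra.adjoin ℂ {H, K} = ⊤, i.e. H and K generate the full matrix algebra M_{2n}(ℂ). -/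
open Matrix

/-- The `(i, j)` q-block of a `qn × qn` matrix indexed by `Fin n × Fin q`. -/
def blk {n q : ℕ} (M : Matrix (Fin n × Fin q) (Fin n × Fin q) ℂ) (i j : Fin n) :
    Matrix (Fin q) (Fin q) ℂ :=
  Matrix.of fun a b => M (i, a) (j, b)

/-- `IsWord H K i j w` means that `w` is a nonempty product
`blk M₁ i j₁ * blk M₂ j₁ j₂ * ⋯ * blk Mₛ jₛ₋₁ j` of q-blocks of `H` and `K`,
i.e. a q-word based at `i` and ending at `j`. -/
inductive IsWord {n q : ℕ} (H K : Matrix (Fin n × Fin q) (Fin n × Fin q) ℂ) :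
    Fin n → Fin n → Matrix (Fin q) (Fin q) ℂ → Prop
  | base (M : Matrix (Fin n × Fin q) (Fin n × Fin q) ℂ) (hM : M = H ∨ M = K)
      (i j : Fin n) : IsWord H K i j (blk M i j)
  | step (M : Matrix (Fin n × Fin q) (Fin n × Fin q) ℂ) (hM : M = H ∨ M = K)
      (i j l : Fin n) (w : Matrix (Fin q) (Fin q) ℂ) :
      IsWord H K j l w → IsWord H K i l (blk M i j * w)

/-- The element of `Fin n × Fin q` corresponding to the flat index `t`, under the
identification `(i, a) ↦ q * i + a` of `Fin n × Fin q` with `Fin (q * n)`. -/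
def unflat {n q : ℕ} (hn : 0 < n) (hq : 0 < q) (t : ℕ) : Fin n × Fin q :=
  (⟨(t / q) % n, Nat.mod_lt _ hn⟩, ⟨t % q, Nat.mod_lt _ hq⟩)

/-- **Condition L-q**: there is a partition `l 0 = 1, l 1 = 1, l 2, …, l (m-1)` of `n`,
nondecreasing, with each later part a sum of an initial segment of earlier parts, such
that each of the corresponding square top-row blocks of `H` (of sizes `q * l j`) is
invertible. -/
def CondL {n q : ℕ} (hn : 0 < n) (hq : 0 < q)
    (H : Matrix (Fin n × Fin q) (Fin n × Fin q) ℂ) : Prop :=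
  ∃ (m : ℕ) (_ : 2 ≤ m) (l : Fin m → ℕ),
    (∀ j : Fin m, (j : ℕ) ≤ 1 → l j = 1) ∧
    Monotone l ∧
    (∑ i, l i) = n ∧
    (∀ j : Fin m, 2 ≤ (j : ℕ) → ∃ k : Fin m, k < j ∧ l j = ∑ i ∈ Finset.Iic k, l i) ∧
    (∀ j : Fin m, IsUnit (Matrix.of fun r c : Fin (q * l j) =>
      H (unflat hn hq (r : ℕ)) (unflat hn hq (q * (∑ i ∈ Finset.Iio j, l i) + (c : ℕ)))))


noncomputable section
set_option linter.unusedSectionVars false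

noncomputable section
set_option linter.unusedSectionVars false

variable {ι : Type*} [Fintype ι] [DecidableEq ι]

private lemma sum_swap13 (f : ι → ι → ι → ℂ) :
    (∑ i, ∑ j, ∑ k, f i j k) = ∑ k, ∑ j, ∑ i, f i j k := by
  calc (∑ i, ∑ j, ∑ k, f i j k)
      = ∑ i, ∑ k, ∑ j, f i j k := Finset.sum_congr rfl fun i _ => Finset.sum_comm
    _ = ∑ k, ∑ i, ∑ j, f i j k := Finset.sum_comm
    _ = ∑ k, ∑ j, ∑ i, f i j k := Finset.sum_congr rfl fun k _ => Finset.sum_comm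

/-- The matrix space as a Euclidean space (Frobenius inner product). -/
def matE (ι : Type*) [Fintype ι] : Matrix ι ι ℂ ≃ₗ[ℂ] EuclideanSpace ℂ (ι × ι) :=
  (LinearEquiv.curry ℂ ℂ ι ι).symm ≪≫ₗ (WithLp.linearEquiv 2 ℂ (ι × ι → ℂ)).symm

lemma matE_apply (X : Matrix ι ι ℂ) (p : ι × ι) : matE ι X p = X p.1 p.2 := rfl

lemma inner_matE (X Y : Matrix ι ι ℂ) :
    (inner ℂ (matE ι X) (matE ι Y) : ℂ) =
      ∑ p : ι × ι, (starRingEnd ℂ) (X p.1 p.2) * Y p.1 p.2 := by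
  simp [PiLp.inner_apply, RCLike.inner_apply, matE_apply, mul_comm]

lemma inner_matE_mul (a X Y : Matrix ι ι ℂ) :
    (inner ℂ (matE ι X) (matE ι (a * Y)) : ℂ) = inner ℂ (matE ι (aᴴ * X)) (matE ι Y) := by
  simp only [inner_matE, Fintype.sum_prod_type, mul_apply, conjTranspose_apply, map_sum,
    _root_.map_mul, Complex.conj_conj, Finset.mul_sum, Finset.sum_mul, RCLike.star_def]
  rw [sum_swap13]
  refine Finset.sum_congr rfl fun i _ => Finset.sum_congr rfl fun j _ =>
    Finset.sum_congr rfl fun k _ => ?_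
  ring

lemma mul_stdBasisMatrix_sum (a : Matrix ι ι ℂ) (t s : ι) :
    a * Matrix.single t s 1 = ∑ r, a r t • Matrix.single r s 1 := by
  ext x y
  simp [mul_apply, Matrix.single, Matrix.sum_apply, Finset.sum_ite_eq,
    Finset.sum_ite_eq', mul_ite, ite_and]

lemma star_subalg_eq_top (A : Subalgebra ℂ (Matrix ι ι ℂ))
    (hstar : ∀ a ∈ A, aᴴ ∈ A)
    (hcomm : ∀ D : Matrix ι ι ℂ, (∀ a ∈ A, D * a = a * D) → ∃ c : ℂ, D = c • 1) :
    A = ⊤ := by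
  classical
  set W : Submodule ℂ (EuclideanSpace ℂ (ι × ι)) :=
    (Subalgebra.toSubmodule A).map (matE ι).toLinearMap with hW
  set Qlin : Matrix ι ι ℂ →ₗ[ℂ] Matrix ι ι ℂ :=
    (matE ι).symm.toLinearMap ∘ₗ (W.subtype ∘ₗ (W.orthogonalProjectionOnto).toLinearMap)
      ∘ₗ (matE ι).toLinearMap with hQlin
  have hQdef : ∀ X, Qlin X = (matE ι).symm (W.orthogonalProjectionOnto (matE ι X)) := fun X => rfl
  have hQmem : ∀ X, Qlin X ∈ A := by
    intro X
    rw [hQdef]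
    rcases (W.orthogonalProjectionOnto ((matE ι) X)).2 with ⟨a, ha, hae⟩
    rw [← hae]
    simpa using ha
  have hQid : ∀ X ∈ A, Qlin X = X := by
    intro X hX
    have : (W.orthogonalProjectionOnto (matE ι X) : EuclideanSpace ℂ (ι × ι)) = matE ι X :=
      Submodule.starProjection_eq_self_iff.mpr ⟨X, hX, rfl⟩
    rw [hQdef, this]; simp
  -- module property
  have hQmul : ∀ a ∈ A, ∀ X, Qlin (a * X) = a * Qlin X := by
    intro a ha X
    have hu : a * Qlin X ∈ A := A.mul_mem ha (hQmem X)
    have hv : matE ι (a * (X - Qlin X)) ∈ Wᗮ := by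
      rw [Submodule.mem_orthogonal]
      rintro w ⟨b, hb, rfl⟩
      have hXQ : matE ι (X - Qlin X) ∈ Wᗮ := by
        have h3 : matE ι (X - Qlin X)
            = matE ι X - W.orthogonalProjectionOnto (matE ι X) := by
          rw [map_sub, hQdef]; simp
        rw [h3]; exact Submodule.sub_starProjection_mem_orthogonal _
      show (inner ℂ ((matE ι) b) ((matE ι) (a * (X - Qlin X))) : ℂ) = 0
      rw [inner_matE_mul a b (X - Qlin X)]
      exact hXQ _ ⟨_, A.mul_mem (hstar a ha) hb, rfl⟩
    have hsplit : matE ι (a * X) = matE ι (a * Qlin X) + matE ι (a * (X - Qlin X)) := by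
      rw [← map_add]; congr 1; rw [mul_sub]; abel
    have hkey : (W.orthogonalProjectionOnto (matE ι (a * X)) : EuclideanSpace ℂ (ι × ι))
        = matE ι (a * Qlin X) := by
      rw [hsplit, map_add]
      have h1 : (W.orthogonalProjectionOnto (matE ι (a * Qlin X)) : EuclideanSpace ℂ (ι × ι))
          = matE ι (a * Qlin X) := Submodule.starProjection_eq_self_iff.mpr ⟨_, hu, rfl⟩
      have h2 : W.orthogonalProjectionOnto (matE ι (a * (X - Qlin X))) = 0 :=
        Submodule.orthogonalProjectionOnto_apply_of_mem_orthogonal hv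
      rw [Submodule.coe_add, h1, h2]; simp
    rw [hQdef, hkey]; simp
  -- the commutant matrices
  have hΨ : ∀ q s : ι, ∃ cc : ℂ,
      (Matrix.of fun p r => Qlin (Matrix.single r s 1) p q) = cc • 1 := by
    intro q s
    apply hcomm
    intro a ha
    ext p t
    have h1 : Qlin (a * Matrix.single t s 1) = a * Qlin (Matrix.single t s 1) :=
      hQmul a ha _
    have h2 : Qlin (a * Matrix.single t s 1) = ∑ r, a r t • Qlin (Matrix.single r s 1) := by
      rw [mul_stdBasisMatrix_sum, map_sum]
      exact Finset.sum_congr rfl fun r _ => map_smul Qlin _ _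
    have h3 := h1.symm.trans h2
    have h4 := congrFun (congrFun h3 p) q
    simp only [Matrix.sum_apply, Matrix.smul_apply, smul_eq_mul] at h4
    simp only [Matrix.mul_apply, Matrix.of_apply]
    calc ∑ r, Qlin (Matrix.single r s 1) p q * a r t
        = ∑ r, a r t * Qlin (Matrix.single r s 1) p q :=
          Finset.sum_congr rfl fun r _ => mul_comm _ _
      _ = (a * Qlin (Matrix.single t s 1)) p q := h4.symm
      _ = ∑ r, a p r * Qlin (Matrix.single t s 1) r q := Matrix.mul_apply
  choose c hc using hΨ
  have hcent : ∀ r s p q : ι, Qlin (Matrix.single r s 1) p q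
      = c q s * (1 : Matrix ι ι ℂ) p r := by
    intro r s p q
    have := congrFun (congrFun (hc q s) p) r
    simpa using this
  have hQX : ∀ (X : Matrix ι ι ℂ) (p q : ι), Qlin X p q = ∑ s, X p s * c q s := by
    intro X p q
    conv_lhs => rw [matrix_eq_sum_single X]
    have hsb : ∀ (r s : ι), Matrix.single r s (X r s) = X r s • Matrix.single r s 1 := by
      intro r s
      rw [smul_single]
      simp
    calc Qlin (∑ r, ∑ s, Matrix.single r s (X r s)) p q
        = (∑ r, ∑ s, X r s • Qlin (Matrix.single r s 1)) p q := by
          have hmat : Qlin (∑ r, ∑ s, Matrix.single r s (X r s))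
              = ∑ r, ∑ s, X r s • Qlin (Matrix.single r s 1) := by
            rw [map_sum]
            refine Finset.sum_congr rfl fun r _ => ?_
            rw [map_sum]
            exact Finset.sum_congr rfl fun s _ => by rw [hsb]; exact map_smul Qlin _ _
          rw [hmat]
      _ = ∑ r, ∑ s, X r s * (c q s * (1 : Matrix ι ι ℂ) p r) := by
          simp only [Matrix.sum_apply, Matrix.smul_apply, smul_eq_mul]
          exact Finset.sum_congr rfl fun r _ => Finset.sum_congr rfl fun s _ => by
            rw [hcent]
      _ = ∑ s, X p s * c q s := by
          rw [Finset.sum_comm]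
          refine Finset.sum_congr rfl fun s _ => ?_
          simp only [Matrix.one_apply, mul_ite, mul_one, mul_zero, ite_mul, zero_mul]
          simp
  have hcval : ∀ p q : ι, c q p = (1 : Matrix ι ι ℂ) p q := by
    intro p q
    have h1 := hQX 1 p q
    rw [hQid 1 A.one_mem] at h1
    rw [h1]
    simp [Matrix.one_apply, Finset.sum_ite_eq]
  have hQeq : ∀ X : Matrix ι ι ℂ, Qlin X = X := by
    intro X
    ext p q
    rw [hQX]
    simp only [hcval, Matrix.one_apply, mul_ite, mul_one, mul_zero]
    simp
  rw [eq_top_iff]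
  intro X _
  rw [← hQeq X]
  exact hQmem X

lemma cent2_span {A D : Matrix (Fin 2) (Fin 2) ℂ} (hA : ∀ c : ℂ, A ≠ c • 1)
    (h : D * A = A * D) : ∃ α β : ℂ, D = α • 1 + β • A := by
  obtain ⟨a, b, c, d, p, q, r, s, ha, hb, hc, hd, hp, hq, hr, hs⟩ :
      ∃ a b c d p q r s : ℂ, A 0 0 = a ∧ A 0 1 = b ∧ A 1 0 = c ∧ A 1 1 = d ∧
        D 0 0 = p ∧ D 0 1 = q ∧ D 1 0 = r ∧ D 1 1 = s :=
    ⟨_, _, _, _, _, _, _, _, rfl, rfl, rfl, rfl, rfl, rfl, rfl, rfl⟩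
  have e00 := congrFun (congrFun h 0) 0
  have e01 := congrFun (congrFun h 0) 1
  have e10 := congrFun (congrFun h 1) 0
  simp only [Matrix.mul_apply, Fin.sum_univ_two, ha, hb, hc, hd, hp, hq, hr, hs]
    at e00 e01 e10
  have hqc : q * c = b * r := by linear_combination e00
  have hfin : ∀ α β : ℂ, α + β * a = p → β * b = q → β * c = r → α + β * d = s →
      D = α • 1 + β • A := by
    intro α β h1 h2 h3 h4
    ext i j
    fin_cases i <;> fin_cases j <;>
      simp only [Fin.zero_eta, Fin.mk_one, Matrix.add_apply, Matrix.smul_apply,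
        Matrix.one_apply, smul_eq_mul, ha, hb, hc, hd, hp, hq, hr, hs] <;> simp
    · linear_combination -h1
    · linear_combination -h2
    · linear_combination -h3
    · linear_combination -h4
  by_cases hbz : b ≠ 0
  · refine ⟨p - q / b * a, q / b, hfin _ _ (by ring) (by field_simp) ?_ ?_⟩
    · field_simp; linear_combination hqc
    · field_simp; linear_combination e01
  · push_neg at hbz
    by_cases hcz : c ≠ 0
    · refine ⟨p - r / c * a, r / c, hfin _ _ (by ring) ?_ (by field_simp) ?_⟩
      · field_simp; linear_combination -hqc
      · field_simp; linear_combination -e10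
    · push_neg at hcz
      by_cases had : a = d
      · refine absurd ?_ (hA a)
        ext i j
        fin_cases i <;> fin_cases j <;>
          simp only [Fin.zero_eta, Fin.mk_one, Matrix.smul_apply, Matrix.one_apply, smul_eq_mul, ha, hb, hc, hd] <;>
          simp [hd, hbz, hcz, ← had]
      · have hq0 : q = 0 := by
          have h5 : q * (d - a) = 0 := by linear_combination e01 + (s - p) * hbz
          rcases mul_eq_zero.mp h5 with h' | h'
          · exact h'
          · exact absurd (by linear_combination -h') had
        have hr0 : r = 0 := by
          have h5 : r * (a - d) = 0 := by linear_combination e10 + (p - s) * hcz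
          rcases mul_eq_zero.mp h5 with h' | h'
          · exact h'
          · exact absurd (by linear_combination h') had
        have hda : d - a ≠ 0 := fun h' => had (by linear_combination -h')
        refine ⟨p - (s - p) / (d - a) * a, (s - p) / (d - a),
          hfin _ _ (by ring) (by rw [hbz, mul_zero, hq0]) (by rw [hcz, mul_zero, hr0]) ?_⟩
        field_simp
        ring

lemma cent2_pair {A B D : Matrix (Fin 2) (Fin 2) ℂ} (hAB : A * B ≠ B * A)
    (hDA : D * A = A * D) (hDB : D * B = B * D) : ∃ c : ℂ, D = c • 1 := by
  have hA : ∀ c : ℂ, A ≠ c • 1 := by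
    rintro c rfl
    exact hAB (by rw [Matrix.smul_mul, Matrix.mul_smul, Matrix.one_mul, Matrix.mul_one])
  obtain ⟨α, β, rfl⟩ := cent2_span hA hDA
  by_cases hβ : β = 0
  · exact ⟨α, by rw [hβ, zero_smul, add_zero]⟩
  · exfalso
    apply hAB
    have h1 : (α • 1 + β • A) * B = B * (α • 1 + β • A) := hDB
    have h2 : β • (A * B) = β • (B * A) := by
      have := h1
      simp only [Matrix.add_mul, Matrix.mul_add, Matrix.smul_mul, Matrix.mul_smul,
        Matrix.one_mul, Matrix.mul_one] at this
      exact add_left_cancel this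
    exact smul_right_injective _ hβ h2

section PartA

variable {n : ℕ}

lemma blk_mul_apply {D M : Matrix (Fin n × Fin 2) (Fin n × Fin 2) ℂ} (i j : Fin n)
    (a b : Fin 2) : (blk D i j * blk M j j) a b = ∑ c, D (i,a) (j,c) * M (j,c) (j,b) := rfl

lemma blk_comm {D M : Matrix (Fin n × Fin 2) (Fin n × Fin 2) ℂ}
    (hbd : ∀ p q : Fin n × Fin 2, p.1 ≠ q.1 → D p q = 0) (hDM : D * M = M * D)
    (i j : Fin n) : blk D i i * blk M i j = blk M i j * blk D j j := by
  ext a b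
  have h1 := congrFun (congrFun hDM (i,a)) (j,b)
  rw [Matrix.mul_apply, Matrix.mul_apply, Fintype.sum_prod_type, Fintype.sum_prod_type] at h1
  have hL : (∑ l, ∑ c, D (i,a) (l,c) * M (l,c) (j,b))
      = ∑ c, D (i,a) (i,c) * M (i,c) (j,b) :=
    Finset.sum_eq_single i
      (fun l _ hl => Finset.sum_eq_zero fun c _ => by
        rw [hbd (i,a) (l,c) (Ne.symm hl), zero_mul])
      (fun h => absurd (Finset.mem_univ i) h)
  have hR : (∑ l, ∑ c, M (i,a) (l,c) * D (l,c) (j,b))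
      = ∑ c, M (i,a) (j,c) * D (j,c) (j,b) :=
    Finset.sum_eq_single j
      (fun l _ hl => Finset.sum_eq_zero fun c _ => by
        rw [hbd (l,c) (j,b) hl, mul_zero])
      (fun h => absurd (Finset.mem_univ j) h)
  rw [hL, hR] at h1
  simpa [Matrix.mul_apply, blk] using h1

lemma blk_conjTranspose (D : Matrix (Fin n × Fin 2) (Fin n × Fin 2) ℂ) (i j : Fin n) :
    blk Dᴴ i j = (blk D j i)ᴴ := rfl

lemma blk_word_comm {H K D : Matrix (Fin n × Fin 2) (Fin n × Fin 2) ℂ}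
    (hbd : ∀ p q : Fin n × Fin 2, p.1 ≠ q.1 → D p q = 0)
    (hDH : D * H = H * D) (hDK : D * K = K * D)
    {i j : Fin n} {w : Matrix (Fin 2) (Fin 2) ℂ} (hw : IsWord H K i j w) :
    blk D i i * w = w * blk D j j := by
  induction hw with
  | base M hM i j =>
    rcases hM with rfl | rfl
    · exact blk_comm hbd hDH i j
    · exact blk_comm hbd hDK i j
  | step M hM i j l w hw ih =>
    rcases hM with rfl | rfl
    · rw [← Matrix.mul_assoc, blk_comm hbd hDH i j, Matrix.mul_assoc, ih, Matrix.mul_assoc]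
    · rw [← Matrix.mul_assoc, blk_comm hbd hDK i j, Matrix.mul_assoc, ih, Matrix.mul_assoc]

lemma K_herm {k : Fin n → ℝ} {K : Matrix (Fin n × Fin 2) (Fin n × Fin 2) ℂ}
    (hK : ∀ p q : Fin n × Fin 2, K p q = if p = q then (k p.1 : ℂ) else 0) : Kᴴ = K := by
  ext p q
  rw [Matrix.conjTranspose_apply, hK q p, hK p q]
  by_cases h : p = q
  · subst h; simp [Complex.conj_ofReal]
  · rw [if_neg h, if_neg (fun h' => h h'.symm), star_zero]

lemma commutant_trivial (hn : 0 < n)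
    (H K : Matrix (Fin n × Fin 2) (Fin n × Fin 2) ℂ)
    (hH : Hᴴ = H)
    (k : Fin n → ℝ) (hk : Function.Injective k)
    (hK : ∀ p q : Fin n × Fin 2, K p q = if p = q then (k p.1 : ℂ) else 0)
    (hL : CondL hn (by norm_num) H)
    (hw : ∃ (w₁ w₂ : Matrix (Fin 2) (Fin 2) ℂ) (j₁ j₂ : Fin n),
      IsWord H K ⟨0, hn⟩ j₁ w₁ ∧ IsWord H K ⟨0, hn⟩ j₂ w₂ ∧
      (w₁ * w₁ᴴ) * (w₂ * w₂ᴴ) ≠ (w₂ * w₂ᴴ) * (w₁ * w₁ᴴ))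
    (D : Matrix (Fin n × Fin 2) (Fin n × Fin 2) ℂ)
    (hDH : D * H = H * D) (hDK : D * K = K * D) :
    ∃ c : ℂ, D = c • 1 := by
  classical
  -- block diagonality of D
  have hbd : ∀ p q : Fin n × Fin 2, p.1 ≠ q.1 → D p q = 0 := by
    intro p q hpq
    have h1 := congrFun (congrFun hDK p) q
    rw [Matrix.mul_apply, Matrix.mul_apply] at h1
    have hLs : (∑ x, D p x * K x q) = D p q * (k q.1 : ℂ) := by
      rw [Finset.sum_eq_single q (fun x _ hx => by rw [hK x q, if_neg hx, mul_zero])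
        (fun h => absurd (Finset.mem_univ q) h), hK q q, if_pos rfl]
    have hRs : (∑ x, K p x * D x q) = (k p.1 : ℂ) * D p q := by
      rw [Finset.sum_eq_single p (fun x _ hx => by rw [hK p x, if_neg (Ne.symm hx), zero_mul])
        (fun h => absurd (Finset.mem_univ p) h), hK p p, if_pos rfl]
    rw [hLs, hRs] at h1
    have hkk : (k q.1 : ℂ) - (k p.1 : ℂ) ≠ 0 := by
      rw [sub_ne_zero]
      exact_mod_cast fun h => hpq (hk (Complex.ofReal_inj.mp h)).symm
    have : D p q * ((k q.1 : ℂ) - (k p.1 : ℂ)) = 0 := by ring_nf; linear_combination h1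
    exact (mul_eq_zero.mp this).resolve_right hkk
  -- K is hermitian
  have hKH : Kᴴ = K := K_herm hK
  -- Dᴴ commutes as well
  have hDHH : Dᴴ * H = H * Dᴴ := by
    have h2 := congrArg Matrix.conjTranspose hDH
    rw [Matrix.conjTranspose_mul, Matrix.conjTranspose_mul, hH] at h2
    exact h2.symm
  have hDKH : Dᴴ * K = K * Dᴴ := by
    have h2 := congrArg Matrix.conjTranspose hDK
    rw [Matrix.conjTranspose_mul, Matrix.conjTranspose_mul, hKH] at h2
    exact h2.symm
  have hbdH : ∀ p q : Fin n × Fin 2, p.1 ≠ q.1 → Dᴴ p q = 0 := by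
    intro p q hpq
    rw [Matrix.conjTranspose_apply, hbd q p (Ne.symm hpq), star_zero]
  -- D₀ commutes with the two word products
  set z : Fin n := ⟨0, hn⟩ with hz
  obtain ⟨w₁, w₂, j₁, j₂, hw1, hw2, hne⟩ := hw
  have hcw : ∀ (j : Fin n) (w : Matrix (Fin 2) (Fin 2) ℂ), IsWord H K z j w →
      blk D z z * (w * wᴴ) = (w * wᴴ) * blk D z z := by
    intro j w hwj
    have h1 : blk D z z * w = w * blk D j j := blk_word_comm hbd hDH hDK hwj
    have h1' : blk Dᴴ z z * w = w * blk Dᴴ j j := blk_word_comm hbdH hDHH hDKH hwj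
    have h1'' : wᴴ * blk D z z = blk D j j * wᴴ := by
      have h2 := congrArg Matrix.conjTranspose h1'
      rw [Matrix.conjTranspose_mul, Matrix.conjTranspose_mul, blk_conjTranspose,
        blk_conjTranspose, Matrix.conjTranspose_conjTranspose,
        Matrix.conjTranspose_conjTranspose] at h2
      exact h2
    calc blk D z z * (w * wᴴ) = (blk D z z * w) * wᴴ := (Matrix.mul_assoc _ _ _).symm
      _ = w * (blk D j j * wᴴ) := by rw [h1, Matrix.mul_assoc]
      _ = w * (wᴴ * blk D z z) := by rw [← h1'']
      _ = (w * wᴴ) * blk D z z := (Matrix.mul_assoc _ _ _).symm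
  obtain ⟨c, hc⟩ := cent2_pair hne (hcw j₁ w₁ hw1) (hcw j₂ w₂ hw2)
  -- Condition L-2 propagation: every diagonal block is c • 1
  have hall : ∀ i : Fin n, blk D i i = c • 1 := by
    obtain ⟨m, hm, l, h01, hmono, hsum, hpart, hinv⟩ := hL
    have h02 : (0:ℕ) < 2 := by norm_num
    set E : Matrix (Fin n × Fin 2) (Fin n × Fin 2) ℂ := D - c • 1 with hE
    have hE_entry : ∀ p q : Fin n × Fin 2, E p q = D p q - (if p = q then c else 0) := by
      intro p q
      rw [hE]
      simp [Matrix.sub_apply, Matrix.smul_apply, Matrix.one_apply, mul_ite, mul_one, mul_zero]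
    have hEdiag : ∀ p q : Fin n × Fin 2, p.1 ≠ q.1 → E p q = 0 := by
      intro p q h
      rw [hE_entry, hbd p q h, if_neg (fun h5 => h (Prod.ext_iff.mp h5).1), sub_zero]
    have hblk_of : ∀ i : Fin n, (∀ a b : Fin 2, E (i,a) (i,b) = 0) → blk D i i = c • 1 := by
      intro i h
      ext a b
      have h3 := h a b
      rw [hE_entry] at h3
      have h4 : D (i,a) (i,b) = if ((i,a) : Fin n × Fin 2) = (i,b) then c else 0 :=
        sub_eq_zero.mp h3
      show D (i,a) (i,b) = (c • (1 : Matrix (Fin 2) (Fin 2) ℂ)) a b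
      rw [h4]
      simp [Matrix.one_apply, Prod.ext_iff, mul_ite]
    have hErow : ∀ p q : Fin n × Fin 2, blk D p.1 p.1 = c • 1 → E p q = 0 := by
      intro p q hp
      by_cases hpq : p.1 = q.1
      · have h3 := congrFun (congrFun hp p.2) q.2
        simp only [blk, Matrix.of_apply, Matrix.smul_apply, Matrix.one_apply,
          smul_eq_mul] at h3
        have hpp : ((p.1, p.2) : Fin n × Fin 2) = p := rfl
        have hqq : ((p.1, q.2) : Fin n × Fin 2) = q := by rw [hpq]
        rw [hpp, hqq] at h3
        rw [hE_entry, h3]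
        by_cases h5 : p.2 = q.2
        · rw [if_pos h5, if_pos (Prod.ext hpq h5)]; ring
        · rw [if_neg h5, if_neg (fun hh => h5 (Prod.ext_iff.mp hh).2)]; ring
      · rw [hEdiag p q hpq]
    have hcommE : H * E = E * H := by
      rw [hE, Matrix.mul_sub, Matrix.sub_mul, Matrix.mul_smul, Matrix.smul_mul,
        Matrix.mul_one, Matrix.one_mul, hDH]
    have hHE0 : ∀ (N : ℕ), (∀ i : Fin n, (i:ℕ) < N → blk D i i = c • 1) →
        ∀ p q : Fin n × Fin 2, (p.1 : ℕ) < N → (H * E) p q = 0 := by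
      intro N hN p q hp
      rw [hcommE, Matrix.mul_apply]
      exact Finset.sum_eq_zero fun x _ => by rw [hErow p x (hN p.1 hp), zero_mul]
    have hufst : ∀ t : ℕ, t < 2*n → ((unflat hn h02 t).1 : ℕ) = t / 2 := by
      intro t ht
      show (t / 2) % n = t / 2
      exact Nat.mod_eq_of_lt (by omega)
    have husnd : ∀ t : ℕ, ((unflat hn h02 t).2 : ℕ) = t % 2 := fun t => rfl
    have hueq : ∀ (t : ℕ) (p : Fin n × Fin 2), t < 2*n → ((p.1:ℕ) = t/2) →
        ((p.2:ℕ) = t%2) → unflat hn h02 t = p := by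
      intro t p ht hp1 hp2
      cases p with
      | mk p1 p2 =>
        simp only [unflat, Prod.mk.injEq, Fin.ext_iff] at *
        refine ⟨?_, by omega⟩
        show (t / 2) % n = (p1 : ℕ)
        rw [Nat.mod_eq_of_lt (by omega)]
        omega
    -- key step: the invertible block kills the error on the column range
    have key : ∀ j : Fin m,
        (∀ i : Fin n, (i : ℕ) < l j → blk D i i = c • 1) →
        ∀ i : Fin n, (∑ x ∈ Finset.Iio j, l x) ≤ (i : ℕ) →
          (i : ℕ) < (∑ x ∈ Finset.Iio j, l x) + l j → blk D i i = c • 1 := by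
      intro j hrows i hsi hisl
      obtain ⟨s, hs⟩ : ∃ s, s = ∑ x ∈ Finset.Iio j, l x := ⟨_, rfl⟩
      rw [← hs] at hsi hisl
      have hsLn : s + l j ≤ n := by
        have h7 : (∑ x ∈ Finset.Iic j, l x) ≤ ∑ x, l x :=
          Finset.sum_le_sum_of_subset (Finset.subset_univ _)
        rw [hsum] at h7
        have h8 : (∑ x ∈ Finset.Iic j, l x) = l j + ∑ x ∈ Finset.Iio j, l x := by
          rw [← Finset.sum_insert (by simp : j ∉ Finset.Iio j), Finset.Iio_insert]
        omega
      have hUB : IsUnit (Matrix.of fun r c'' : Fin (2 * l j) =>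
          H (unflat hn h02 (r : ℕ)) (unflat hn h02 (2 * s + (c'' : ℕ)))) := by
        rw [hs]; exact hinv j
      set B : Matrix (Fin (2 * l j)) (Fin (2 * l j)) ℂ := Matrix.of fun r c'' =>
          H (unflat hn h02 (r : ℕ)) (unflat hn h02 (2 * s + (c'' : ℕ))) with hB
      set E' : Matrix (Fin (2 * l j)) (Fin (2 * l j)) ℂ := Matrix.of fun r c'' =>
          E (unflat hn h02 (2 * s + (r : ℕ))) (unflat hn h02 (2 * s + (c'' : ℕ))) with hE'
      have hBE : B * E' = 0 := by
        ext r c'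
        have hrb := r.isLt
        have hcb := c'.isLt
        have hq1 : ((unflat hn h02 (2 * s + (c' : ℕ))).1 : ℕ) = s + (c' : ℕ) / 2 := by
          rw [hufst _ (by omega)]; omega
        have hr1 : ((unflat hn h02 (r : ℕ)).1 : ℕ) < l j := by
          rw [hufst _ (by omega)]; omega
        have h9 : (H * E) (unflat hn h02 (r:ℕ)) (unflat hn h02 (2*s + (c':ℕ))) = 0 :=
          hHE0 (l j) hrows _ _ hr1
        rw [Matrix.mul_apply] at h9
        rw [Matrix.mul_apply, Matrix.zero_apply]
        have hfinj : ∀ x ∈ Finset.univ, ∀ y ∈ Finset.univ,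
            (fun x : Fin (2 * l j) => unflat hn h02 (2 * s + (x:ℕ))) x
              = (fun x : Fin (2 * l j) => unflat hn h02 (2 * s + (x:ℕ))) y → x = y := by
          intro x _ y _ hxy
          simp only at hxy
          have hxb := x.isLt
          have hyb := y.isLt
          have e1 : (2*s + (x:ℕ))/2 = (2*s + (y:ℕ))/2 := by
            rw [← hufst _ (by omega), ← hufst _ (by omega), hxy]
          have e2 : (2*s + (x:ℕ)) % 2 = (2*s + (y:ℕ)) % 2 := by
            rw [← husnd (2*s + (x:ℕ)), ← husnd (2*s + (y:ℕ)), hxy]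
          exact Fin.ext (by omega)
        calc (∑ x, B r x * E' x c')
            = ∑ x : Fin (2 * l j), H (unflat hn h02 (r:ℕ)) (unflat hn h02 (2*s + (x:ℕ)))
                * E (unflat hn h02 (2*s + (x:ℕ))) (unflat hn h02 (2*s + (c':ℕ))) := rfl
          _ = ∑ y ∈ Finset.univ.image (fun x : Fin (2 * l j) => unflat hn h02 (2 * s + (x:ℕ))),
                H (unflat hn h02 (r:ℕ)) y * E y (unflat hn h02 (2*s + (c':ℕ))) :=
              (Finset.sum_image (f := fun y => H (unflat hn h02 (r:ℕ)) y
                * E y (unflat hn h02 (2*s + (c':ℕ)))) hfinj).symm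
          _ = ∑ y, H (unflat hn h02 (r:ℕ)) y * E y (unflat hn h02 (2*s + (c':ℕ))) := by
              refine Finset.sum_subset (Finset.subset_univ _) (fun y _ hy => ?_)
              have hy2 := y.2.isLt
              have hy1n := y.1.isLt
              have hy1 : y.1 ≠ (unflat hn h02 (2*s + (c':ℕ))).1 := by
                intro heq
                apply hy
                have hy1v : (y.1 : ℕ) = s + (c':ℕ)/2 := by rw [heq, hq1]
                refine Finset.mem_image.mpr
                  ⟨⟨2*((y.1:ℕ) - s) + (y.2:ℕ), by omega⟩, Finset.mem_univ _, ?_⟩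
                refine hueq _ _ (by omega) ?_ ?_
                · show (y.1:ℕ) = (2*s + (2*((y.1:ℕ) - s) + (y.2:ℕ)))/2
                  omega
                · show (y.2:ℕ) = (2*s + (2*((y.1:ℕ) - s) + (y.2:ℕ))) % 2
                  omega
              rw [hEdiag y _ (fun hh => hy1 hh), mul_zero]
          _ = 0 := h9
      have hdet : IsUnit B.det := (Matrix.isUnit_iff_isUnit_det B).mp hUB
      have hE'0 : E' = 0 := by
        calc E' = (B⁻¹ * B) * E' := by rw [Matrix.nonsing_inv_mul B hdet, Matrix.one_mul]
          _ = B⁻¹ * (B * E') := Matrix.mul_assoc _ _ _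
          _ = 0 := by rw [hBE, Matrix.mul_zero]
      refine hblk_of i fun a b => ?_
      have hab := a.isLt
      have hbb := b.isLt
      have hxb : 2*((i:ℕ) - s) + (a:ℕ) < 2 * l j := by omega
      have hyb : 2*((i:ℕ) - s) + (b:ℕ) < 2 * l j := by omega
      have h10 := congrFun (congrFun hE'0 ⟨_, hxb⟩) ⟨_, hyb⟩
      rw [hE'] at h10
      simp only [Matrix.of_apply, Matrix.zero_apply] at h10
      have hux : unflat hn h02 (2*s + (2*((i:ℕ)-s) + (a:ℕ))) = (i, a) := by
        have hin := i.isLt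
        refine hueq _ _ (by omega) ?_ ?_ <;>
          [show (i:ℕ) = (2*s + (2*((i:ℕ)-s) + (a:ℕ)))/2;
           show (a:ℕ) = (2*s + (2*((i:ℕ)-s) + (a:ℕ))) % 2] <;> omega
      have huy : unflat hn h02 (2*s + (2*((i:ℕ)-s) + (b:ℕ))) = (i, b) := by
        have hin := i.isLt
        refine hueq _ _ (by omega) ?_ ?_ <;>
          [show (i:ℕ) = (2*s + (2*((i:ℕ)-s) + (b:ℕ)))/2;
           show (b:ℕ) = (2*s + (2*((i:ℕ)-s) + (b:ℕ))) % 2] <;> omega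
      rw [hux, huy] at h10
      exact h10
    -- induction over the partition
    have main : ∀ t : ℕ, ∀ ht : t < m, ∀ i : Fin n,
        (i : ℕ) < ∑ x ∈ Finset.Iic (⟨t, ht⟩ : Fin m), l x → blk D i i = c • 1 := by
      intro t
      induction t using Nat.strong_induction_on with
      | _ t IH =>
        intro ht i hi
        rcases Nat.eq_zero_or_pos t with rfl | htpos
        · have hIic : Finset.Iic (⟨0, ht⟩ : Fin m) = {(⟨0, ht⟩ : Fin m)} := by
            ext x
            simp only [Finset.mem_Iic, Finset.mem_singleton, Fin.le_def, Fin.ext_iff]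
            omega
          rw [hIic, Finset.sum_singleton, h01 _ (by simp)] at hi
          have hiz : i = z := Fin.ext (by simp [hz]; omega)
          rw [hiz]; exact hc
        · have ht1 : t - 1 < m := by omega
          have hIH := IH (t-1) (by omega) ht1
          have hiio : Finset.Iic (⟨t-1, ht1⟩ : Fin m) = Finset.Iio (⟨t, ht⟩ : Fin m) := by
            ext x
            simp only [Finset.mem_Iic, Finset.mem_Iio, Fin.le_def, Fin.lt_def]
            omega
          rw [hiio] at hIH
          have hsum_split : (∑ x ∈ Finset.Iic (⟨t, ht⟩ : Fin m), l x)
              = l ⟨t, ht⟩ + ∑ x ∈ Finset.Iio (⟨t, ht⟩ : Fin m), l x := by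
            rw [← Finset.sum_insert (by simp : (⟨t, ht⟩ : Fin m) ∉ Finset.Iio (⟨t, ht⟩ : Fin m)),
              Finset.Iio_insert]
          have hrows : ∀ i' : Fin n, (i' : ℕ) < l ⟨t, ht⟩ → blk D i' i' = c • 1 := by
            intro i' hi'
            apply hIH
            have hlle : l ⟨t, ht⟩ ≤ ∑ x ∈ Finset.Iio (⟨t, ht⟩ : Fin m), l x := by
              rcases Nat.lt_or_ge t 2 with h2t | h2t
              · have hl1 : l ⟨t, ht⟩ = 1 := h01 _ (by simp; omega)
                have h0m : (0:ℕ) < m := by omega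
                have h0mem : (⟨0, h0m⟩ : Fin m) ∈ Finset.Iio (⟨t, ht⟩ : Fin m) := by
                  simp [Fin.lt_def]
                  omega
                have := Finset.single_le_sum (f := l) (fun x _ => Nat.zero_le _) h0mem
                rw [h01 _ (by simp)] at this
                omega
              · obtain ⟨k', hk', hlk⟩ := hpart ⟨t, ht⟩ (by simpa using h2t)
                rw [hlk]
                refine Finset.sum_le_sum_of_subset ?_
                intro x hx
                simp only [Finset.mem_Iic] at hx
                simp only [Finset.mem_Iio]
                exact lt_of_le_of_lt hx hk'
            omega
          rcases Nat.lt_or_ge (i:ℕ) (∑ x ∈ Finset.Iio (⟨t, ht⟩ : Fin m), l x) with hlt | hge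
          · exact hIH i hlt
          · exact key ⟨t, ht⟩ hrows i hge (by omega)
    intro i
    have hm1 : m - 1 < m := by omega
    have huniv : Finset.Iic (⟨m-1, hm1⟩ : Fin m) = Finset.univ := by
      ext x
      simp only [Finset.mem_Iic, Finset.mem_univ, iff_true, Fin.le_def]
      omega
    exact main (m-1) hm1 i (by rw [huniv, hsum]; exact i.isLt)
  -- conclude
  refine ⟨c, ?_⟩
  ext p q
  by_cases h : p.1 = q.1
  · have h2 := congrFun (congrFun (hall p.1) p.2) q.2
    rw [blk] at h2
    simp only [Matrix.of_apply] at h2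
    have hpe : ((p.1, p.2) : Fin n × Fin 2) = p := rfl
    have hqe : ((p.1, q.2) : Fin n × Fin 2) = q := by rw [h]
    rw [hpe, hqe] at h2
    rw [h2]
    simp only [Matrix.smul_apply, Matrix.one_apply, smul_eq_mul]
    congr 1
    by_cases h3 : p = q
    · simp [h3, (Prod.ext_iff.mp h3).2]
    · have h4 : p.2 ≠ q.2 := fun h5 => h3 (Prod.ext h h5)
      simp [h3, h4]
  · rw [hbd p q h]
    simp only [Matrix.smul_apply, Matrix.one_apply, smul_eq_mul]
    rw [if_neg (fun h5 => h (Prod.ext_iff.mp h5).1), mul_zero]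

end PartA

end

/-- **Even-order constructibility.** If `K` is diagonal with `n` distinct real
eigenvalues each of multiplicity 2, `H` satisfies Condition L-2, and there are two
2-words `w₁`, `w₂` based at `0` such that `w₁ w₁ᴴ` and `w₂ w₂ᴴ` do not commute, then
`H` and `K` generate the full matrix algebra `M_{2n}(ℂ)`. -/
theorem even_order_constructibility
    (n : ℕ) (hn : 0 < n)
    (H K : Matrix (Fin n × Fin 2) (Fin n × Fin 2) ℂ)
    (hH : Hᴴ = H)
    (k : Fin n → ℝ) (hk : Function.Injective k)
    (hK : ∀ p q : Fin n × Fin 2, K p q = if p = q then (k p.1 : ℂ) else 0)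
    (hL : CondL hn (by norm_num) H)
    (hw : ∃ (w₁ w₂ : Matrix (Fin 2) (Fin 2) ℂ) (j₁ j₂ : Fin n),
      IsWord H K ⟨0, hn⟩ j₁ w₁ ∧ IsWord H K ⟨0, hn⟩ j₂ w₂ ∧
      (w₁ * w₁ᴴ) * (w₂ * w₂ᴴ) ≠ (w₂ * w₂ᴴ) * (w₁ * w₁ᴴ)) :
    Algebra.adjoin ℂ {H, K} = ⊤ := by
  have hHmem : H ∈ Algebra.adjoin ℂ ({H, K} : Set (Matrix (Fin n × Fin 2) (Fin n × Fin 2) ℂ)) :=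
    Algebra.subset_adjoin (by simp)
  have hKmem : K ∈ Algebra.adjoin ℂ ({H, K} : Set (Matrix (Fin n × Fin 2) (Fin n × Fin 2) ℂ)) :=
    Algebra.subset_adjoin (by simp)
  apply star_subalg_eq_top
  · intro a ha
    induction ha using Algebra.adjoin_induction with
    | mem x hx =>
      rcases hx with rfl | hx
      · rw [hH]; exact hHmem
      · rw [Set.mem_singleton_iff] at hx
        subst hx
        rw [K_herm hK]; exact hKmem
    | algebraMap r =>
      rw [Algebra.algebraMap_eq_smul_one, Matrix.conjTranspose_smul,
        Matrix.conjTranspose_one]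
      exact Subalgebra.smul_mem _ (Subalgebra.one_mem _) _
    | add x y hx hy ihx ihy =>
      rw [Matrix.conjTranspose_add]
      exact Subalgebra.add_mem _ ihx ihy
    | mul x y hx hy ihx ihy =>
      rw [Matrix.conjTranspose_mul]
      exact Subalgebra.mul_mem _ ihy ihx
  · intro D hD
    exact commutant_trivial hn H K hH k hk hK hL hw D
      (hD H hHmem) (hD K hKmem)
end
end

section
/- Let q, n ≥ 1 and let H, K : Matrix (Fin n × Fin q) (Fin n × Fin q) ℂ with Hᴴ = H. Assume: (1) there exist r ≥ 1 and q-words v₁, …, v_r (over H and K), each based at 0 and ending at 0, such that the relation on Fin q given by a → b ↔ a ≠ b ∧ ∃ t, v_t a b ≠ 0 is strongly connected (∀ a b, Relation.ReflTransGen (· → ·) a b); (2) K is the diagonal matrix with q-fold eigenvalues determined by an injective k : Fin n → ℝ; (3) H satisfies Condition L-q; (4) there exists a q-word w (over H and K) based at 0 such that w * wᴴ is a diagonal q×q matrix whose q diagonal entries are pairwise distinct. Then Algebra.adjoin ℂ {H, K} = ⊤, i.e. H and K generate the full matrix algebra M_{qn}(ℂ). -/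
open Matrix

namespace QBC
variable {n q : ℕ}

/-- corner embedding -/
def Emb (i j : Fin n) (X : Matrix (Fin q) (Fin q) ℂ) :
    Matrix (Fin n × Fin q) (Fin n × Fin q) ℂ :=
  Matrix.of fun x y => if x.1 = i ∧ y.1 = j then X x.2 y.2 else 0

/-- block projection -/
def Pm (i : Fin n) : Matrix (Fin n × Fin q) (Fin n × Fin q) ℂ :=
  Matrix.diagonal (fun x => if x.1 = i then 1 else 0)

lemma Emb_apply (i j : Fin n) (X : Matrix (Fin q) (Fin q) ℂ) (x y) :
    Emb i j X x y = if x.1 = i ∧ y.1 = j then X x.2 y.2 else 0 := rfl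

lemma Emb_mul (i j l : Fin n) (X Y : Matrix (Fin q) (Fin q) ℂ) :
    Emb i j X * Emb j l Y = Emb i l (X * Y) := by
  ext x y
  rw [Matrix.mul_apply, Emb_apply, Fintype.sum_prod_type]
  rw [Finset.sum_eq_single j]
  · by_cases hx : x.1 = i <;> by_cases hy : y.1 = l <;>
      simp [Emb_apply, hx, hy, Matrix.mul_apply]
  · intro z1 _ hz1
    apply Finset.sum_eq_zero
    intro z2 _
    simp [Emb_apply, hz1]
  · simp

lemma Emb_add (i j : Fin n) (X Y : Matrix (Fin q) (Fin q) ℂ) :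
    Emb i j (X + Y) = Emb i j X + Emb i j Y := by
  ext x y
  by_cases h : x.1 = i ∧ y.1 = j <;> simp [Emb_apply, h]

lemma Emb_smul (i j : Fin n) (c : ℂ) (X : Matrix (Fin q) (Fin q) ℂ) :
    Emb i j (c • X) = c • Emb i j X := by
  ext x y
  by_cases h : x.1 = i ∧ y.1 = j <;> simp [Emb_apply, h]

lemma Emb_zero (i j : Fin n) : Emb i j (0 : Matrix (Fin q) (Fin q) ℂ) = 0 := by
  ext x y; simp [Emb_apply]

lemma Emb_one (i : Fin n) : Emb i i (1 : Matrix (Fin q) (Fin q) ℂ) = Pm i := by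
  ext x y
  rcases x with ⟨x1, x2⟩; rcases y with ⟨y1, y2⟩
  simp only [Emb_apply, Pm, Matrix.diagonal_apply, Matrix.one_apply, Prod.mk.injEq]
  by_cases h1 : x1 = i <;> by_cases h2 : y1 = i <;> by_cases h3 : x2 = y2 <;> simp_all [eq_comm]

lemma Emb_conjT (i j : Fin n) (X : Matrix (Fin q) (Fin q) ℂ) :
    (Emb i j X)ᴴ = Emb j i Xᴴ := by
  ext x y
  simp only [Matrix.conjTranspose_apply, Emb_apply]
  by_cases h : y.1 = i ∧ x.1 = j
  · simp [h, h.1, h.2]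
  · rw [if_neg h, if_neg (by tauto), star_zero]

lemma P_M_P (i j : Fin n) (M : Matrix (Fin n × Fin q) (Fin n × Fin q) ℂ) :
    Pm i * M * Pm j = Emb i j (blk M i j) := by
  ext x y
  simp only [Pm, Matrix.diagonal_mul, Matrix.mul_diagonal, Emb_apply, blk, Matrix.of_apply]
  by_cases h1 : x.1 = i <;> by_cases h2 : y.1 = j
  · simp only [h1, h2, if_true, and_self, one_mul, mul_one, if_pos]
    rw [← h1, ← h2]
  · simp [h1, h2]
  · simp [h1, h2]
  · simp [h1, h2]

lemma sum_Emb_blk (M : Matrix (Fin n × Fin q) (Fin n × Fin q) ℂ) :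
    ∑ i, ∑ j, Emb i j (blk M i j) = M := by
  ext x y
  simp only [Matrix.sum_apply, Emb_apply, blk, Matrix.of_apply]
  rw [Finset.sum_comm]
  rw [Finset.sum_eq_single y.1, Finset.sum_eq_single x.1]
  · simp
  · intro z _ hz
    rw [if_neg (by tauto)]
  · simp
  · intro z _ hz
    apply Finset.sum_eq_zero; intro z' _
    rw [if_neg (by tauto)]
  · simp

lemma aeval_diagonal {N : Type*} [Fintype N] [DecidableEq N] (d : N → ℂ) (p : Polynomial ℂ) :
    Polynomial.aeval (Matrix.diagonal d) p = Matrix.diagonal (fun x => p.eval (d x)) := by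
  have h1 : Matrix.diagonal d = Matrix.diagonalAlgHom ℂ d := rfl
  have hfun : (Polynomial.aeval d p : N → ℂ) = fun x => p.eval (d x) := by
    funext x
    have h2 : d x = (Pi.evalAlgHom ℂ (fun _ : N => ℂ) x) d := rfl
    calc (Polynomial.aeval d p) x
        = (Pi.evalAlgHom ℂ (fun _ : N => ℂ) x) (Polynomial.aeval d p) := rfl
      _ = Polynomial.aeval ((Pi.evalAlgHom ℂ (fun _ : N => ℂ) x) d) p := by
          rw [Polynomial.aeval_algHom_apply]
      _ = p.eval (d x) := by
          rw [← h2, Polynomial.aeval_def, Polynomial.eval]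
          rfl
  rw [h1, Polynomial.aeval_algHom_apply]
  show Matrix.diagonal (Polynomial.aeval d p) = _
  rw [hfun]

lemma diag_indicator_mem {N : Type*} [Fintype N] [DecidableEq N]
    (A : Subalgebra ℂ (Matrix N N ℂ)) (d : N → ℂ) (hd : Matrix.diagonal d ∈ A)
    (c : ℂ) (x0 : N) (hx0 : d x0 = c) :
    Matrix.diagonal (fun x => if d x = c then (1 : ℂ) else 0) ∈ A := by
  classical
  set s : Finset ℂ := Finset.univ.image d with hs
  have hcs : c ∈ s := by
    rw [hs]; exact Finset.mem_image.2 ⟨x0, Finset.mem_univ _, hx0⟩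
  set p : Polynomial ℂ := Lagrange.basis s id c with hp
  have hmem : Polynomial.aeval (Matrix.diagonal d) p ∈ A := by
    have h1 : Polynomial.aeval (Matrix.diagonal d) p ∈
        Algebra.adjoin ℂ {Matrix.diagonal d} := by
      rw [Algebra.adjoin_singleton_eq_range_aeval]
      exact ⟨p, rfl⟩
    exact Algebra.adjoin_le (Set.singleton_subset_iff.2 hd) h1
  rw [aeval_diagonal] at hmem
  convert hmem using 2
  funext x
  by_cases h : d x = c
  · rw [if_pos h, hp, h]
    simpa using (Lagrange.eval_basis_self (Set.injOn_id _) hcs).symm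
  · rw [if_neg h, hp]
    have : (Lagrange.basis s id c).eval (id (d x)) = 0 :=
      Lagrange.eval_basis_of_ne (fun hc => h (hc ▸ rfl)) (by
        rw [hs]; exact Finset.mem_image.2 ⟨x, Finset.mem_univ _, rfl⟩)
    simpa using this.symm

lemma std_corner {q : ℕ} (Y : Matrix (Fin q) (Fin q) ℂ) (a b : Fin q) :
    Matrix.single a a 1 * Y * Matrix.single b b 1
      = Matrix.single a b (Y a b) := by
  ext i' j'
  by_cases h2 : j' = b
  · subst h2
    rw [Matrix.mul_single_apply_same]
    by_cases h1 : i' = a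
    · subst h1
      rw [Matrix.single_mul_apply_same, Matrix.single_apply_same,
        one_mul, mul_one]
    · rw [Matrix.single_mul_apply_of_ne (h := h1),
        Matrix.single_apply_of_ne (h := by tauto), zero_mul]
  · rw [Matrix.mul_single_apply_of_ne (hbj := h2),
      Matrix.single_apply_of_ne (h := by tauto)]

lemma flat_lt {n q d : ℕ} (hq : 0 < q) (r : Fin n) (a : Fin q) (h : (r : ℕ) < d) :
    q * (r : ℕ) + (a : ℕ) < q * d := by
  calc q * (r : ℕ) + (a : ℕ) < q * (r : ℕ) + q := by omega
    _ = q * ((r : ℕ) + 1) := by ring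
    _ ≤ q * d := Nat.mul_le_mul_left q (by omega)

lemma unflat_flat {n q : ℕ} (hn : 0 < n) (hq : 0 < q) (z : Fin n × Fin q) :
    unflat hn hq (q * (z.1 : ℕ) + (z.2 : ℕ)) = z := by
  rcases z with ⟨z1, z2⟩
  have h1 : (q * (z1 : ℕ) + (z2 : ℕ)) / q = (z1 : ℕ) := by
    rw [Nat.mul_add_div hq, Nat.div_eq_of_lt z2.isLt, Nat.add_zero]
  have h2 : (q * (z1 : ℕ) + (z2 : ℕ)) % q = (z2 : ℕ) := by
    rw [Nat.mul_add_mod, Nat.mod_eq_of_lt z2.isLt]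
  have h3 : ((z1 : ℕ)) % n = (z1 : ℕ) := Nat.mod_eq_of_lt z1.isLt
  simp only [unflat, h1, h2, h3]

lemma flat_unflat {n q : ℕ} (hn : 0 < n) (hq : 0 < q) (t : ℕ) (ht : t < q * n) :
    q * ((unflat hn hq t).1 : ℕ) + ((unflat hn hq t).2 : ℕ) = t := by
  have hdiv : t / q < n := by
    rcases Nat.lt_or_ge (t / q) n with h | h
    · exact h
    · exact absurd ht (by
        have : q * n ≤ q * (t/q) := Nat.mul_le_mul_left q h
        have h2 : q * (t/q) ≤ t := Nat.mul_div_le t q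
        omega)
  simp only [unflat, Nat.mod_eq_of_lt hdiv]
  exact Nat.div_add_mod t q

lemma sum_reindex {n q : ℕ} (hn : 0 < n) (hq : 0 < q) (d : ℕ) (hd : 0 < d) (hdn : d ≤ n)
    (f : Fin n × Fin q → ℂ) (hf : ∀ z : Fin n × Fin q, d ≤ (z.1 : ℕ) → f z = 0) :
    ∑ z, f z = ∑ t : Fin (q * d), f (unflat hn hq (t : ℕ)) := by
  have hqd : 0 < q * d := Nat.mul_pos hq hd
  have hstep : ∑ z ∈ Finset.univ.filter (fun z : Fin n × Fin q => (z.1 : ℕ) < d), f z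
      = ∑ z : Fin n × Fin q, f z := by
    apply Finset.sum_subset (Finset.filter_subset _ _)
    intro z _ hz
    apply hf
    by_contra hcon
    exact hz (Finset.mem_filter.2 ⟨Finset.mem_univ _, by omega⟩)
  rw [← hstep]
  apply Finset.sum_nbij'
    (i := fun z : Fin n × Fin q =>
      (⟨(q * (z.1 : ℕ) + (z.2 : ℕ)) % (q * d), Nat.mod_lt _ hqd⟩ : Fin (q * d)))
    (j := fun t : Fin (q * d) => unflat hn hq (t : ℕ))
  · intro z _; exact Finset.mem_univ _
  · intro t _
    refine Finset.mem_filter.2 ⟨Finset.mem_univ _, ?_⟩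
    show ((t : ℕ) / q) % n < d
    have h1 : (t : ℕ) / q < d := Nat.div_lt_of_lt_mul (by omega)
    rw [Nat.mod_eq_of_lt (lt_of_lt_of_le h1 hdn)]
    exact h1
  · intro z hz
    have hzd : (z.1 : ℕ) < d := by
      have := (Finset.mem_filter.1 hz).2; exact this
    have hlt := flat_lt hq z.1 z.2 hzd
    show unflat hn hq ((q * (z.1 : ℕ) + (z.2 : ℕ)) % (q * d)) = z
    rw [Nat.mod_eq_of_lt hlt]
    exact unflat_flat hn hq z
  · intro t _
    have ht : (t : ℕ) < q * n := lt_of_lt_of_le t.isLt (Nat.mul_le_mul_left q hdn)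
    ext
    show (q * ((unflat hn hq (t:ℕ)).1 : ℕ) + ((unflat hn hq (t:ℕ)).2 : ℕ)) % (q*d) = (t:ℕ)
    rw [flat_unflat hn hq _ ht, Nat.mod_eq_of_lt t.isLt]
  · intro z hz
    have hzd : (z.1 : ℕ) < d := (Finset.mem_filter.1 hz).2
    have hlt := flat_lt hq z.1 z.2 hzd
    rw [show ((⟨(q * (z.1 : ℕ) + (z.2 : ℕ)) % (q * d), Nat.mod_lt _ hqd⟩ : Fin (q*d)) : ℕ)
        = (q * (z.1 : ℕ) + (z.2 : ℕ)) % (q*d) from rfl, Nat.mod_eq_of_lt hlt,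
      unflat_flat hn hq z]

lemma flat_lt' {q d r a : ℕ} (ha : a < q) (h : r < d) : q * r + a < q * d := by
  calc q * r + a < q * r + q := by omega
    _ = q * (r + 1) := by ring
    _ ≤ q * d := Nat.mul_le_mul_left q (by omega)

lemma diag_single {q : ℕ} (a : Fin q) :
    Matrix.diagonal (fun x => if x = a then (1 : ℂ) else 0)
      = Matrix.single a a 1 := by
  ext i j
  by_cases h1 : i = j
  · subst h1
    by_cases h2 : i = a
    · subst h2; simp [Matrix.diagonal_apply]
    · rw [Matrix.diagonal_apply_eq, if_neg h2,
        Matrix.single_apply_of_ne (h := by tauto)]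
  · rw [Matrix.diagonal_apply_ne _ h1, Matrix.single_apply_of_ne (h := by
      rintro ⟨rfl, rfl⟩; exact h1 rfl)]

lemma sum_Pm {n q : ℕ} (p : Fin n → Prop) [DecidablePred p] :
    ∑ r ∈ Finset.univ.filter p, (Pm r : Matrix (Fin n × Fin q) (Fin n × Fin q) ℂ)
      = Matrix.diagonal (fun x : Fin n × Fin q => if p x.1 then (1 : ℂ) else 0) := by
  ext x y
  rw [Matrix.sum_apply]
  by_cases hxy : x = y
  · subst hxy
    simp only [Pm, Matrix.diagonal_apply_eq]
    rw [Finset.sum_ite_eq (Finset.univ.filter p) x.1 (fun _ => (1:ℂ))]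
    simp
  · simp only [Pm]
    exact Eq.trans (Finset.sum_eq_zero fun r _ => Matrix.diagonal_apply_ne _ hxy)
      (Matrix.diagonal_apply_ne _ hxy).symm

/-- partial sums of `l` -/
def Sm {m : ℕ} (l : Fin m → ℕ) (jj : ℕ) : ℕ :=
  ∑ i ∈ Finset.univ.filter (fun i : Fin m => (i : ℕ) < jj), l i

lemma Sm_zero {m : ℕ} (l : Fin m → ℕ) : Sm l 0 = 0 := by simp [Sm]

lemma Sm_succ {m : ℕ} (l : Fin m → ℕ) (jj : ℕ) (h : jj < m) :
    Sm l (jj + 1) = Sm l jj + l ⟨jj, h⟩ := by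
  have hins : Finset.univ.filter (fun i : Fin m => (i : ℕ) < jj + 1)
      = insert (⟨jj, h⟩ : Fin m) (Finset.univ.filter (fun i : Fin m => (i : ℕ) < jj)) := by
    ext i
    simp only [Finset.mem_filter, Finset.mem_univ, true_and, Finset.mem_insert, Fin.ext_iff]
    omega
  rw [Sm, hins, Finset.sum_insert (by simp)]
  rw [Sm]; ring

lemma Sm_mono {m : ℕ} (l : Fin m → ℕ) {a b : ℕ} (h : a ≤ b) : Sm l a ≤ Sm l b := by
  apply Finset.sum_le_sum_of_subset
  intro i hi
  simp only [Finset.mem_filter, Finset.mem_univ, true_and] at *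
  omega

lemma Sm_top {m : ℕ} (l : Fin m → ℕ) : Sm l m = ∑ i, l i := by
  rw [Sm, Finset.filter_true_of_mem (fun i _ => i.isLt)]

lemma Sm_one {m : ℕ} (l : Fin m → ℕ) (hm : 0 < m)
    (h1 : ∀ j : Fin m, (j : ℕ) ≤ 1 → l j = 1) : Sm l (0 + 1) = 1 := by
  rw [Sm_succ l 0 hm, Sm_zero, Nat.zero_add, h1 _ (by simp)]

lemma Sm_Iio {m : ℕ} (l : Fin m → ℕ) (j : Fin m) :
    ∑ i ∈ Finset.Iio j, l i = Sm l (j : ℕ) := by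
  rw [Sm]
  apply Finset.sum_congr _ (fun _ _ => rfl)
  ext i
  simp only [Finset.mem_Iio, Finset.mem_filter, Finset.mem_univ, true_and, Fin.lt_def]

end QBC

/-- **q-block constructibility.** Suppose `K` is diagonal with `n` distinct real
eigenvalues each of multiplicity `q`, `H` satisfies Condition L-q, there are
q-words `v₁, …, v_r` based at `0` and ending at `0` whose Burnside graph on
`Fin q` is strongly connected, and there is a q-word `w` based at `0` with
`w wᴴ` diagonal with `q` pairwise distinct diagonal entries. Then `H` and `K`
generate the full matrix algebra `M_{qn}(ℂ)`. -/
theorem q_block_constructibility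
    (q n : ℕ) (hq : 0 < q) (hn : 0 < n)
    (H K : Matrix (Fin n × Fin q) (Fin n × Fin q) ℂ)
    (hH : Hᴴ = H)
    (k : Fin n → ℝ) (hk : Function.Injective k)
    (hK : ∀ x y : Fin n × Fin q, K x y = if x = y then (k x.1 : ℂ) else 0)
    (hv : ∃ (r : ℕ) (_ : 1 ≤ r) (v : Fin r → Matrix (Fin q) (Fin q) ℂ),
      (∀ t, IsWord H K ⟨0, hn⟩ ⟨0, hn⟩ (v t)) ∧
      (∀ a b : Fin q,
        Relation.ReflTransGen (fun a b : Fin q => a ≠ b ∧ ∃ t, v t a b ≠ 0) a b))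
    (hL : CondL hn hq H)
    (hw : ∃ (w : Matrix (Fin q) (Fin q) ℂ) (j : Fin n),
      IsWord H K ⟨0, hn⟩ j w ∧
      ∃ dvals : Fin q → ℂ, Function.Injective dvals ∧ w * wᴴ = Matrix.diagonal dvals) :
    Algebra.adjoin ℂ {H, K} = ⊤ := by
  classical
  set z0 : Fin n := ⟨0, hn⟩ with hz0
  set A : Subalgebra ℂ (Matrix (Fin n × Fin q) (Fin n × Fin q) ℂ) :=
    Algebra.adjoin ℂ {H, K} with hA
  have hHA : H ∈ A := Algebra.subset_adjoin (by simp)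
  have hKA : K ∈ A := Algebra.subset_adjoin (by simp)
  have hKdiag : K = Matrix.diagonal (fun x : Fin n × Fin q => (k x.1 : ℂ)) := by
    ext x y; rw [hK, Matrix.diagonal_apply]
  have hKstar : Kᴴ = K := by
    rw [hKdiag, Matrix.diagonal_conjTranspose]
    have : (star fun x : Fin n × Fin q => ((k x.1 : ℝ) : ℂ))
        = fun x : Fin n × Fin q => ((k x.1 : ℝ) : ℂ) := by
      funext x
      rw [Pi.star_apply, Complex.star_def, Complex.conj_ofReal]
    rw [this]
  -- star closure
  have hstar : ∀ x ∈ A, xᴴ ∈ A := by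
    intro x hx
    induction hx using Algebra.adjoin_induction with
    | mem y hy =>
      rcases hy with rfl | hy
      · rw [hH]; exact hHA
      · rw [Set.mem_singleton_iff] at hy; subst hy; rw [hKstar]; exact hKA
    | algebraMap r =>
      rw [Algebra.algebraMap_eq_smul_one, Matrix.conjTranspose_smul,
        Matrix.conjTranspose_one]
      exact Subalgebra.smul_mem _ (one_mem _) _
    | add x y _ _ hx' hy' => rw [Matrix.conjTranspose_add]; exact add_mem hx' hy'
    | mul x y _ _ hx' hy' => rw [Matrix.conjTranspose_mul]; exact mul_mem hy' hx'
  -- block projections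
  have hPm : ∀ i : Fin n, (QBC.Pm i : Matrix (Fin n × Fin q) (Fin n × Fin q) ℂ) ∈ A := by
    intro i
    have h1 := QBC.diag_indicator_mem A (fun x : Fin n × Fin q => (k x.1 : ℂ))
      (hKdiag ▸ hKA) ((k i : ℝ) : ℂ) (i, ⟨0, hq⟩) rfl
    have hfun : (fun x : Fin n × Fin q =>
        if ((k x.1 : ℝ) : ℂ) = ((k i : ℝ) : ℂ) then (1:ℂ) else 0)
        = fun x : Fin n × Fin q => if x.1 = i then (1:ℂ) else 0 := by
      funext x
      by_cases h : x.1 = i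
      · rw [if_pos h, if_pos (by rw [h])]
      · rw [if_neg h, if_neg (fun hc => h (hk (Complex.ofReal_inj.mp hc)))]
    have h2 : (Matrix.diagonal fun x : Fin n × Fin q =>
        if ((k x.1 : ℝ) : ℂ) = ((k i : ℝ) : ℂ) then (1:ℂ) else 0) = QBC.Pm i := by
      rw [QBC.Pm]; exact congrArg Matrix.diagonal hfun
    rwa [h2] at h1
  -- words give corner elements
  have wordMem : ∀ (i j : Fin n) (w : Matrix (Fin q) (Fin q) ℂ),
      IsWord H K i j w → QBC.Emb i j w ∈ A := by
    intro i j w hw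
    induction hw with
    | base M hM i j =>
      rw [← QBC.P_M_P]
      refine mul_mem (mul_mem (hPm i) ?_) (hPm j)
      rcases hM with rfl | rfl
      · exact hHA
      · exact hKA
    | step M hM i j l w _ ih =>
      rw [← QBC.Emb_mul i j l]
      refine mul_mem ?_ ih
      rw [← QBC.P_M_P]
      refine mul_mem (mul_mem (hPm i) ?_) (hPm j)
      rcases hM with rfl | rfl
      · exact hHA
      · exact hKA
  -- the corner subalgebra at (0, 0)
  set SA : Subalgebra ℂ (Matrix (Fin q) (Fin q) ℂ) :=
    { carrier := {X | QBC.Emb z0 z0 X ∈ A}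
      mul_mem' := fun {X Y} hX hY => by
        show QBC.Emb z0 z0 (X * Y) ∈ A
        rw [← QBC.Emb_mul z0 z0 z0]
        exact mul_mem hX hY
      one_mem' := by
        show QBC.Emb z0 z0 1 ∈ A
        rw [QBC.Emb_one]; exact hPm z0
      add_mem' := fun {X Y} hX hY => by
        show QBC.Emb z0 z0 (X + Y) ∈ A
        rw [QBC.Emb_add]; exact add_mem hX hY
      zero_mem' := by
        show QBC.Emb z0 z0 0 ∈ A
        rw [QBC.Emb_zero]; exact zero_mem _
      algebraMap_mem' := fun c => by
        show QBC.Emb z0 z0 (algebraMap ℂ _ c) ∈ A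
        rw [Algebra.algebraMap_eq_smul_one, QBC.Emb_smul, QBC.Emb_one]
        exact Subalgebra.smul_mem _ (hPm z0) c } with hSA
  have hSAmem : ∀ X : Matrix (Fin q) (Fin q) ℂ, X ∈ SA ↔ QBC.Emb z0 z0 X ∈ A :=
    fun X => Iff.rfl
  -- diagonal units in SA
  obtain ⟨w, jw, hwword, dvals, hdinj, hdiag⟩ := hw
  have hwA : QBC.Emb z0 jw w ∈ A := wordMem _ _ _ hwword
  have hwHA : QBC.Emb jw z0 wᴴ ∈ A := by
    rw [← QBC.Emb_conjT]; exact hstar _ hwA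
  have hDSA : Matrix.diagonal dvals ∈ SA := by
    rw [hSAmem, ← hdiag, ← QBC.Emb_mul z0 jw z0]
    exact mul_mem hwA hwHA
  have hstdSA : ∀ a : Fin q, Matrix.single a a (1:ℂ) ∈ SA := by
    intro a
    have h1 := QBC.diag_indicator_mem SA dvals hDSA (dvals a) a rfl
    have hfun : (fun x => if dvals x = dvals a then (1:ℂ) else 0)
        = fun x : Fin q => if x = a then (1:ℂ) else 0 := by
      funext x
      by_cases h : x = a
      · rw [if_pos h, if_pos (by rw [h])]
      · rw [if_neg h, if_neg fun hc => h (hdinj hc)]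
    have h2 : (Matrix.diagonal fun x => if dvals x = dvals a then (1:ℂ) else 0)
        = Matrix.single a a (1:ℂ) := by
      rw [← QBC.diag_single a]; exact congrArg Matrix.diagonal hfun
    rwa [h2] at h1
  obtain ⟨r, hr1, v, hvword, hvconn⟩ := hv
  have hvSA : ∀ t, v t ∈ SA := fun t => (hSAmem _).2 (wordMem _ _ _ (hvword t))
  have hedge : ∀ a b : Fin q, (a ≠ b ∧ ∃ t, v t a b ≠ 0) →
      Matrix.single a b (1:ℂ) ∈ SA := by
    rintro a b ⟨hab, t, hvt⟩
    have h1 : Matrix.single a a 1 * v t * Matrix.single b b 1 ∈ SA :=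
      mul_mem (mul_mem (hstdSA a) (hvSA t)) (hstdSA b)
    rw [QBC.std_corner] at h1
    have h2 : Matrix.single a b (1:ℂ)
        = (v t a b)⁻¹ • Matrix.single a b (v t a b) := by
      rw [Matrix.smul_single, smul_eq_mul, inv_mul_cancel₀ hvt]
    rw [h2]
    exact Subalgebra.smul_mem _ h1 _
  have hstdall : ∀ a b : Fin q, Matrix.single a b (1:ℂ) ∈ SA := by
    intro a b
    induction hvconn a b with
    | refl => exact hstdSA a
    | tail _ hstep ih =>
      rename_i b' c _
      have h1 := hedge b' c hstep
      have h2 := mul_mem ih h1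
      rwa [Matrix.single_mul_single_same, one_mul] at h2
  have Good0 : ∀ X : Matrix (Fin q) (Fin q) ℂ, QBC.Emb z0 z0 X ∈ A := by
    intro X
    rw [← hSAmem]
    rw [Matrix.matrix_eq_sum_single X]
    refine sum_mem fun a _ => sum_mem fun b _ => ?_
    have : Matrix.single a b (X a b) = (X a b) • Matrix.single a b (1:ℂ) := by
      rw [Matrix.smul_single, smul_eq_mul, mul_one]
    rw [this]
    exact Subalgebra.smul_mem _ (hstdall a b) _

  -- Condition L induction
  obtain ⟨m, hm2, l, hl01, hlmono, hlsum, hlrec, hlinv⟩ := hL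
  have main : ∀ jj : ℕ, 1 ≤ jj → jj ≤ m →
      ∀ i : Fin n, (i : ℕ) < QBC.Sm l jj → ∀ X : Matrix (Fin q) (Fin q) ℂ,
      QBC.Emb z0 i X ∈ A := by
    intro jj
    induction jj with
    | zero => omega
    | succ jj ih =>
      intro _ hjm i hi X
      by_cases hjj0 : jj = 0
      · subst hjj0
        rw [QBC.Sm_one l (by omega) hl01] at hi
        have h2 : i = z0 := by
          apply Fin.ext
          simp only [hz0]
          omega
        rw [h2]
        exact Good0 X
      · have hjm' : jj < m := by omega
        rcases Nat.lt_or_ge (i : ℕ) (QBC.Sm l jj) with hlt | hge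
        · exact ih (by omega) (by omega) i hlt X
        · -- corner argument
          have hd1 : 1 ≤ l ⟨jj, hjm'⟩ := by
            have h3 : l ⟨0, by omega⟩ ≤ l ⟨jj, hjm'⟩ := hlmono (by simp [Fin.le_def])
            rw [hl01 _ (by simp)] at h3
            exact h3
          have hdS0 : l ⟨jj, hjm'⟩ ≤ QBC.Sm l jj := by
            by_cases h2 : 2 ≤ jj
            · obtain ⟨kk, hkj, hlk⟩ := hlrec ⟨jj, hjm'⟩ (by show 2 ≤ jj; omega)
              rw [hlk]
              have h4 : ∑ i ∈ Finset.Iic kk, l i ≤ ∑ i ∈ Finset.Iio (⟨jj, hjm'⟩ : Fin m), l i := by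
                apply Finset.sum_le_sum_of_subset
                intro x hx
                simp only [Finset.mem_Iic] at hx
                simp only [Finset.mem_Iio]
                exact lt_of_le_of_lt hx hkj
              rw [QBC.Sm_Iio l ⟨jj, hjm'⟩] at h4
              exact h4
            · have hjj1 : jj = 1 := by omega
              subst hjj1
              rw [hl01 _ (by simp), QBC.Sm_one l (by omega) hl01]
          have hSn : QBC.Sm l jj + l ⟨jj, hjm'⟩ ≤ n := by
            have h6 : QBC.Sm l (jj + 1) ≤ QBC.Sm l m := QBC.Sm_mono l (by omega)
            rw [QBC.Sm_succ l jj hjm', QBC.Sm_top, hlsum] at h6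
            exact h6
          have hi' : (i : ℕ) < QBC.Sm l jj + l ⟨jj, hjm'⟩ := by
            rw [QBC.Sm_succ l jj hjm'] at hi
            exact hi
          have FullCorner : ∀ r r' : Fin n, (r : ℕ) < l ⟨jj, hjm'⟩ → (r' : ℕ) < l ⟨jj, hjm'⟩ →
              ∀ Y : Matrix (Fin q) (Fin q) ℂ, QBC.Emb r r' Y ∈ A := by
            intro r r' hr hr' Y
            have h1 : QBC.Emb z0 r Yᴴ ∈ A :=
              ih (by omega) (by omega) r (lt_of_lt_of_le hr hdS0) Yᴴ
            have h2 : QBC.Emb r z0 Y ∈ A := by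
              have h3 := hstar _ h1
              rwa [QBC.Emb_conjT, Matrix.conjTranspose_conjTranspose] at h3
            have h4 : QBC.Emb z0 r' (1 : Matrix (Fin q) (Fin q) ℂ) ∈ A :=
              ih (by omega) (by omega) r' (lt_of_lt_of_le hr' hdS0) 1
            have h5 := mul_mem h2 h4
            rwa [QBC.Emb_mul, mul_one] at h5
          -- the invertible block
          have hB : IsUnit (Matrix.of fun r c : Fin (q * l ⟨jj, hjm'⟩) =>
              H (unflat hn hq (r : ℕ)) (unflat hn hq (q * QBC.Sm l jj + (c : ℕ)))) := by
            have h7 := hlinv ⟨jj, hjm'⟩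
            rwa [QBC.Sm_Iio l ⟨jj, hjm'⟩] at h7
          set B : Matrix (Fin (q * l ⟨jj, hjm'⟩)) (Fin (q * l ⟨jj, hjm'⟩)) ℂ :=
            Matrix.of fun r c : Fin (q * l ⟨jj, hjm'⟩) =>
              H (unflat hn hq (r : ℕ)) (unflat hn hq (q * QBC.Sm l jj + (c : ℕ))) with hBdef
          have hBdet : IsUnit B.det := (Matrix.isUnit_iff_isUnit_det B).mp hB
          set T : Matrix (Fin n × Fin q) (Fin n × Fin q) ℂ := QBC.Emb z0 i X with hT
          set Tm : Matrix (Fin (q * l ⟨jj, hjm'⟩)) (Fin (q * l ⟨jj, hjm'⟩)) ℂ :=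
            Matrix.of fun r c : Fin (q * l ⟨jj, hjm'⟩) =>
              T (unflat hn hq (r : ℕ)) (unflat hn hq (q * QBC.Sm l jj + (c : ℕ))) with hTmdef
          set Xm : Matrix (Fin (q * l ⟨jj, hjm'⟩)) (Fin (q * l ⟨jj, hjm'⟩)) ℂ :=
            Tm * B⁻¹ with hXmdef
          have hXmB : Xm * B = Tm := by
            rw [hXmdef, Matrix.mul_assoc, Matrix.nonsing_inv_mul B hBdet, Matrix.mul_one]
          set Xh : Matrix (Fin n × Fin q) (Fin n × Fin q) ℂ :=
            Matrix.of fun x y : Fin n × Fin q =>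
              if h : (x.1 : ℕ) < l ⟨jj, hjm'⟩ ∧ (y.1 : ℕ) < l ⟨jj, hjm'⟩ then
                Xm ⟨q * (x.1 : ℕ) + (x.2 : ℕ), QBC.flat_lt' x.2.isLt h.1⟩
                   ⟨q * (y.1 : ℕ) + (y.2 : ℕ), QBC.flat_lt' y.2.isLt h.2⟩
              else 0 with hXhdef
          have hXhA : Xh ∈ A := by
            rw [← QBC.sum_Emb_blk Xh]
            refine sum_mem fun r _ => sum_mem fun r' _ => ?_
            by_cases hr : (r : ℕ) < l ⟨jj, hjm'⟩ ∧ (r' : ℕ) < l ⟨jj, hjm'⟩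
            · exact FullCorner r r' hr.1 hr.2 _
            · have hblk : blk Xh r r' = 0 := by
                ext a b
                show Xh (r, a) (r', b) = 0
                rw [hXhdef]
                exact dif_neg hr
              rw [hblk, QBC.Emb_zero]
              exact zero_mem _
          set Rp : Matrix (Fin n × Fin q) (Fin n × Fin q) ℂ :=
            Matrix.diagonal (fun x : Fin n × Fin q =>
              if (x.1 : ℕ) < l ⟨jj, hjm'⟩ then (1:ℂ) else 0) with hRpdef
          set Qp : Matrix (Fin n × Fin q) (Fin n × Fin q) ℂ :=
            Matrix.diagonal (fun x : Fin n × Fin q =>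
              if QBC.Sm l jj ≤ (x.1 : ℕ) ∧ (x.1 : ℕ) < QBC.Sm l jj + l ⟨jj, hjm'⟩
              then (1:ℂ) else 0) with hQpdef
          have hRpA : Rp ∈ A := by
            rw [hRpdef, ← QBC.sum_Pm (fun r : Fin n => (r : ℕ) < l ⟨jj, hjm'⟩)]
            exact sum_mem fun r _ => hPm r
          have hQpA : Qp ∈ A := by
            rw [hQpdef, ← QBC.sum_Pm (fun r : Fin n =>
              QBC.Sm l jj ≤ (r : ℕ) ∧ (r : ℕ) < QBC.Sm l jj + l ⟨jj, hjm'⟩)]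
            exact sum_mem fun r _ => hPm r
          have hfinal : Xh * (Rp * H * Qp) = T := by
            ext x y
            rw [Matrix.mul_apply]
            have hRHQ : ∀ z : Fin n × Fin q, (Rp * H * Qp) z y
                = (if (z.1 : ℕ) < l ⟨jj, hjm'⟩ then (1:ℂ) else 0) * H z y
                  * (if QBC.Sm l jj ≤ (y.1 : ℕ) ∧ (y.1 : ℕ) < QBC.Sm l jj + l ⟨jj, hjm'⟩
                     then (1:ℂ) else 0) := by
              intro z
              rw [hRpdef, hQpdef, Matrix.mul_diagonal, Matrix.diagonal_mul]
            by_cases hx : (x.1 : ℕ) < l ⟨jj, hjm'⟩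
            · by_cases hy : QBC.Sm l jj ≤ (y.1 : ℕ) ∧ (y.1 : ℕ) < QBC.Sm l jj + l ⟨jj, hjm'⟩
              · -- main case
                have hcty : q * ((y.1 : ℕ) - QBC.Sm l jj) + (y.2 : ℕ) < q * l ⟨jj, hjm'⟩ :=
                  QBC.flat_lt' y.2.isLt (by omega)
                have hfxlt : q * (x.1 : ℕ) + (x.2 : ℕ) < q * l ⟨jj, hjm'⟩ :=
                  QBC.flat_lt' x.2.isLt hx
                have hsum : ∑ z : Fin n × Fin q, Xh x z * (Rp * H * Qp) z y
                    = ∑ t : Fin (q * l ⟨jj, hjm'⟩),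
                        Xm ⟨q * (x.1 : ℕ) + (x.2 : ℕ), hfxlt⟩ t
                        * B t ⟨q * ((y.1 : ℕ) - QBC.Sm l jj) + (y.2 : ℕ), hcty⟩ := by
                  rw [QBC.sum_reindex hn hq (l ⟨jj, hjm'⟩) (by omega) (by omega)
                    (fun z => Xh x z * (Rp * H * Qp) z y)
                    (by
                      intro z hz
                      have h7 : Xh x z = 0 := by
                        rw [hXhdef]; exact dif_neg (by omega)
                      show Xh x z * (Rp * H * Qp) z y = 0
                      rw [h7, zero_mul])]
                  apply Finset.sum_congr rfl
                  intro t _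
                  have htn : (t : ℕ) < q * n :=
                    lt_of_lt_of_le t.isLt (Nat.mul_le_mul_left q (by omega))
                  have hdivlt : (t : ℕ) / q < l ⟨jj, hjm'⟩ := Nat.div_lt_of_lt_mul t.isLt
                  have hz1 : ((unflat hn hq (t : ℕ)).1 : ℕ) = (t : ℕ) / q := by
                    show ((t : ℕ) / q) % n = (t : ℕ) / q
                    exact Nat.mod_eq_of_lt (by omega)
                  have hz1lt : ((unflat hn hq (t : ℕ)).1 : ℕ) < l ⟨jj, hjm'⟩ := by
                    rw [hz1]; exact hdivlt
                  have hXhz : Xh x (unflat hn hq (t : ℕ))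
                      = Xm ⟨q * (x.1 : ℕ) + (x.2 : ℕ), hfxlt⟩ t := by
                    rw [hXhdef]
                    show (if h : (x.1 : ℕ) < l ⟨jj, hjm'⟩
                          ∧ (((unflat hn hq (t : ℕ)).1 : Fin n) : ℕ) < l ⟨jj, hjm'⟩ then
                        Xm ⟨q * (x.1 : ℕ) + (x.2 : ℕ), _⟩
                          ⟨q * (((unflat hn hq (t : ℕ)).1 : Fin n) : ℕ)
                            + (((unflat hn hq (t : ℕ)).2 : Fin q) : ℕ), _⟩
                      else 0) = _
                    rw [dif_pos ⟨hx, hz1lt⟩]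
                    congr 1
                    exact Fin.ext (QBC.flat_unflat hn hq (t : ℕ) htn)
                  have harith : q * QBC.Sm l jj
                      + (q * ((y.1 : ℕ) - QBC.Sm l jj) + (y.2 : ℕ))
                      = q * (y.1 : ℕ) + (y.2 : ℕ) := by
                    have h8 : QBC.Sm l jj + ((y.1 : ℕ) - QBC.Sm l jj) = (y.1 : ℕ) := by omega
                    calc q * QBC.Sm l jj + (q * ((y.1 : ℕ) - QBC.Sm l jj) + (y.2 : ℕ))
                        = q * (QBC.Sm l jj + ((y.1 : ℕ) - QBC.Sm l jj)) + (y.2 : ℕ) := by ring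
                      _ = q * (y.1 : ℕ) + (y.2 : ℕ) := by rw [h8]
                  have hBtc : B t ⟨q * ((y.1 : ℕ) - QBC.Sm l jj) + (y.2 : ℕ), hcty⟩
                      = H (unflat hn hq (t : ℕ)) y := by
                    show H (unflat hn hq (t : ℕ))
                        (unflat hn hq (q * QBC.Sm l jj
                          + (q * ((y.1 : ℕ) - QBC.Sm l jj) + (y.2 : ℕ)))) = _
                    rw [harith]
                    congr 1
                    exact QBC.unflat_flat hn hq y
                  rw [hXhz, hRHQ (unflat hn hq (t : ℕ)), if_pos hz1lt, if_pos hy,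
                    one_mul, mul_one, hBtc]
                rw [hsum, ← Matrix.mul_apply, hXmB]
                show T (unflat hn hq (q * (x.1 : ℕ) + (x.2 : ℕ)))
                    (unflat hn hq (q * QBC.Sm l jj
                      + (q * ((y.1 : ℕ) - QBC.Sm l jj) + (y.2 : ℕ)))) = T x y
                have harith : q * QBC.Sm l jj
                    + (q * ((y.1 : ℕ) - QBC.Sm l jj) + (y.2 : ℕ))
                    = q * (y.1 : ℕ) + (y.2 : ℕ) := by
                  have h8 : QBC.Sm l jj + ((y.1 : ℕ) - QBC.Sm l jj) = (y.1 : ℕ) := by omega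
                  calc q * QBC.Sm l jj + (q * ((y.1 : ℕ) - QBC.Sm l jj) + (y.2 : ℕ))
                      = q * (QBC.Sm l jj + ((y.1 : ℕ) - QBC.Sm l jj)) + (y.2 : ℕ) := by ring
                    _ = q * (y.1 : ℕ) + (y.2 : ℕ) := by rw [h8]
                rw [harith, QBC.unflat_flat hn hq x, QBC.unflat_flat hn hq y]
              · -- y not in the column group
                have hT0 : T x y = 0 := by
                  rw [hT, QBC.Emb_apply, if_neg]
                  rintro ⟨-, h9⟩
                  apply hy
                  rw [h9]
                  exact ⟨hge, hi'⟩
                rw [hT0]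
                apply Finset.sum_eq_zero
                intro z _
                rw [hRHQ z, if_neg hy, mul_zero, mul_zero]
            · -- x not in the row group
              have hT0 : T x y = 0 := by
                rw [hT, QBC.Emb_apply, if_neg]
                rintro ⟨h9, -⟩
                apply hx
                rw [h9]
                show (0 : ℕ) < l ⟨jj, hjm'⟩
                omega
              rw [hT0]
              apply Finset.sum_eq_zero
              intro z _
              have h7 : Xh x z = 0 := by
                rw [hXhdef]; exact dif_neg (by tauto)
              rw [h7, zero_mul]
          have hTA : T ∈ A := by
            rw [← hfinal]
            exact mul_mem hXhA (mul_mem (mul_mem hRpA hHA) hQpA)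
          exact hTA
  -- conclusion
  have GoodAll : ∀ (i : Fin n) (X : Matrix (Fin q) (Fin q) ℂ), QBC.Emb z0 i X ∈ A := by
    intro i X
    apply main m (by omega) le_rfl i _ X
    rw [QBC.Sm_top, hlsum]
    exact i.isLt
  have FullAll : ∀ (i j : Fin n) (Y : Matrix (Fin q) (Fin q) ℂ), QBC.Emb i j Y ∈ A := by
    intro i j Y
    have h1 : QBC.Emb z0 i Yᴴ ∈ A := GoodAll i Yᴴ
    have h2 : QBC.Emb i z0 Y ∈ A := by
      have h3 := hstar _ h1
      rwa [QBC.Emb_conjT, Matrix.conjTranspose_conjTranspose] at h3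
    have h4 := mul_mem h2 (GoodAll j 1)
    rwa [QBC.Emb_mul, mul_one] at h4
  rw [eq_top_iff]
  intro M _
  rw [← QBC.sum_Emb_blk M]
  exact sum_mem fun i _ => sum_mem fun j _ => FullAll i j _
end
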